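/- Let k be a positive semidefinite kernel on a set X with k(x,x) ≤ 1 for all x ∈ X, let x_1, …, x_t ∈ X, and let λ > 0. With σ²_{s−1}(x_s) defined as the Gaussian-process posterior variance after the first s−1 points (σ²_{s−1}(x_s) = k(x_s,x_s) − k_{s−1}(x_s)ᵀ(K_{s−1} + λI)⁻¹ k_{s−1}(x_s), σ_0²(x) = k(x,x)), it holds that Σ_{s=1}^t σ²_{s−1}(x_s) ≤ (1 / log(1 + λ⁻¹)) · log det(I_t + λ⁻¹ K_t), where K_t = [k(x_i,x_j)]_{i,j=1}^t. -/

import Mathlib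

open Matrix

/-- Gram matrix of the first `s` points `x 0, …, x (s-1)` under the kernel `k`. -/
noncomputable def gramMatrix {X : Type*} (k : X → X → ℝ) (x : ℕ → X) (s : ℕ) :
    Matrix (Fin s) (Fin s) ℝ :=
  Matrix.of fun i j => k (x i) (x j)

/-- Gaussian-process posterior variance at `y` after conditioning on the first `s`
points `x 0, …, x (s-1)`, with regularization `λ`:
`σ_s²(y) = k(y,y) − k_s(y)ᵀ (K_s + λ I_s)⁻¹ k_s(y)` (and `σ_0²(y) = k(y,y)`). -/
noncomputable def postVar {X : Type*} (k : X → X → ℝ) (x : ℕ → X) (lam : ℝ)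
    (s : ℕ) (y : X) : ℝ :=
  k y y - (fun i : Fin s => k (x i) y) ⬝ᵥ
    ((gramMatrix k x s + lam • (1 : Matrix (Fin s) (Fin s) ℝ))⁻¹ *ᵥ
      fun i : Fin s => k (x i) y)

section Aux

variable {X : Type*} (k : X → X → ℝ) (x : ℕ → X) (lam : ℝ)

/-- regularized Gram matrix -/
noncomputable def regGram (s : ℕ) : Matrix (Fin s) (Fin s) ℝ :=
  gramMatrix k x s + lam • (1 : Matrix (Fin s) (Fin s) ℝ)

variable {k x lam}

lemma smulone_posdef {s : ℕ} (hlam : 0 < lam) :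
    (lam • (1 : Matrix (Fin s) (Fin s) ℝ)).PosDef := by
  rw [smul_one_eq_diagonal]
  exact Matrix.PosDef.diagonal fun i => hlam

lemma gram_psd (hpsd : ∀ (n : ℕ) (v : Fin n → X),
      (Matrix.of fun i j => k (v i) (v j) : Matrix (Fin n) (Fin n) ℝ).PosSemidef)
    (s : ℕ) : (gramMatrix k x s).PosSemidef := hpsd s fun i => x i

lemma regGram_posdef (hpsd : ∀ (n : ℕ) (v : Fin n → X),
      (Matrix.of fun i j => k (v i) (v j) : Matrix (Fin n) (Fin n) ℝ).PosSemidef)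
    (hlam : 0 < lam) (s : ℕ) : (regGram k x lam s).PosDef :=
  Matrix.PosDef.posSemidef_add (gram_psd hpsd s) (smulone_posdef hlam)

lemma ksymm (hpsd : ∀ (n : ℕ) (v : Fin n → X),
      (Matrix.of fun i j => k (v i) (v j) : Matrix (Fin n) (Fin n) ℝ).PosSemidef)
    (a b : X) : k a b = k b a := by
  have h := (hpsd 2 ![a, b]).1
  have := congrFun (congrFun h 0) 1
  simpa [Matrix.conjTranspose_apply] using this.symm

end Aux

section Blocks

variable {X : Type*} {k : X → X → ℝ} {x : ℕ → X} {lam : ℝ}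
variable (hpsd : ∀ (n : ℕ) (v : Fin n → X),
      (Matrix.of fun i j => k (v i) (v j) : Matrix (Fin n) (Fin n) ℝ).PosSemidef)

/-- border column -/
noncomputable def Bcol (k : X → X → ℝ) (x : ℕ → X) (s : ℕ) : Matrix (Fin s) (Fin 1) ℝ :=
  Matrix.of fun i _ => k (x i) (x s)

noncomputable def Dblk (k : X → X → ℝ) (x : ℕ → X) (s : ℕ) : Matrix (Fin 1) (Fin 1) ℝ :=
  Matrix.of fun _ _ => k (x s) (x s)

include hpsd in
lemma gram_submatrix_eq (s : ℕ) :
    (gramMatrix k x (s+1)).submatrix finSumFinEquiv finSumFinEquiv =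
      fromBlocks (gramMatrix k x s) (Bcol k x s) (Bcol k x s)ᴴ (Dblk k x s) := by
  ext i j
  rcases i with i | i <;> rcases j with j | j <;>
    simp [gramMatrix, Bcol, Dblk, Matrix.fromBlocks, Fin.val_eq_zero, ksymm hpsd]

end Blocks

section Main

variable {X : Type*} {k : X → X → ℝ} {x : ℕ → X} {lam : ℝ}
variable (hpsd : ∀ (n : ℕ) (v : Fin n → X),
      (Matrix.of fun i j => k (v i) (v j) : Matrix (Fin n) (Fin n) ℝ).PosSemidef)

/-- abbreviation for the posterior variance at step s -/
noncomputable def pv (k : X → X → ℝ) (x : ℕ → X) (lam : ℝ) (s : ℕ) : ℝ :=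
  k (x s) (x s) - (fun i : Fin s => k (x i) (x s)) ⬝ᵥ
    ((regGram k x lam s)⁻¹ *ᵥ fun i : Fin s => k (x i) (x s))

include hpsd in
lemma regGram_submatrix_eq (s : ℕ) :
    (regGram k x lam (s+1)).submatrix finSumFinEquiv finSumFinEquiv =
      fromBlocks (regGram k x lam s) (Bcol k x s) (Bcol k x s)ᴴ
        (Dblk k x s + lam • 1) := by
  rw [regGram]
  simp only [Matrix.submatrix_add, Matrix.submatrix_smul, Pi.add_apply, Pi.smul_apply,
    Matrix.submatrix_one_equiv, gram_submatrix_eq hpsd]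
  rw [← Matrix.fromBlocks_one, Matrix.fromBlocks_smul, Matrix.fromBlocks_add, regGram]
  simp only [smul_zero, add_zero]

lemma blk_entry (s : ℕ) (N : Matrix (Fin s) (Fin s) ℝ) :
    ((Bcol k x s)ᴴ * N * Bcol k x s) 0 0 =
      (fun i : Fin s => k (x i) (x s)) ⬝ᵥ (N *ᵥ fun i : Fin s => k (x i) (x s)) := by
  simp only [Matrix.mul_apply, Matrix.mulVec, dotProduct, Bcol,
    Matrix.conjTranspose_apply, Matrix.of_apply, star_trivial, Finset.sum_mul,
    Finset.mul_sum, mul_assoc]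
  rw [Finset.sum_comm]

include hpsd in
lemma det_regGram_succ (hlam : 0 < lam) (s : ℕ) :
    (regGram k x lam (s+1)).det = (regGram k x lam s).det * (lam + pv k x lam s) := by
  have hpd := regGram_posdef (x := x) hpsd hlam s
  have : Invertible (regGram k x lam s) :=
    (regGram k x lam s).invertibleOfIsUnitDet (isUnit_iff_ne_zero.mpr hpd.det_pos.ne')
  rw [← Matrix.det_submatrix_equiv_self finSumFinEquiv (regGram k x lam (s+1)),
    regGram_submatrix_eq hpsd, Matrix.det_fromBlocks₁₁, Matrix.invOf_eq_nonsing_inv,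
    Matrix.det_fin_one]
  congr 1
  simp only [Matrix.sub_apply, Matrix.add_apply, Matrix.smul_apply, Matrix.one_apply_eq,
    smul_eq_mul, mul_one, blk_entry, Dblk, Matrix.of_apply]
  rw [pv]
  ring

lemma blkX_psd (hlam : 0 < lam) (s : ℕ) :
    (fromBlocks (lam • (1 : Matrix (Fin s) (Fin s) ℝ)) 0 0
      (0 : Matrix (Fin 1) (Fin 1) ℝ)).PosSemidef := by
  rw [Matrix.posSemidef_iff_dotProduct_mulVec]
  constructor
  · rw [Matrix.IsHermitian, Matrix.fromBlocks_conjTranspose]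
    simp
  · intro v
    rw [← Sum.elim_comp_inl_inr v, Matrix.fromBlocks_mulVec]
    simp only [star_trivial, sumElim_dotProduct_sumElim, Matrix.zero_mulVec,
      add_zero, zero_add, dotProduct_zero, Matrix.smul_mulVec,
      Matrix.one_mulVec, dotProduct_smul, smul_eq_mul]
    have := dotProduct_star_self_nonneg (v ∘ Sum.inl)
    simp only [star_trivial] at this
    positivity

end Main

section Bounds

variable {X : Type*} {k : X → X → ℝ} {x : ℕ → X} {lam : ℝ}
variable (hpsd : ∀ (n : ℕ) (v : Fin n → X),
      (Matrix.of fun i j => k (v i) (v j) : Matrix (Fin n) (Fin n) ℝ).PosSemidef)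

include hpsd in
lemma pv_nonneg (hlam : 0 < lam) (s : ℕ) : 0 ≤ pv k x lam s := by
  have hpd := regGram_posdef (x := x) hpsd hlam s
  have hblk : (fromBlocks (regGram k x lam s) (Bcol k x s) (Bcol k x s)ᴴ
      (Dblk k x s)).PosSemidef := by
    have heq : fromBlocks (regGram k x lam s) (Bcol k x s) (Bcol k x s)ᴴ (Dblk k x s)
        = (gramMatrix k x (s+1)).submatrix finSumFinEquiv finSumFinEquiv
          + fromBlocks (lam • (1 : Matrix (Fin s) (Fin s) ℝ)) 0 0 0 := by
      rw [gram_submatrix_eq hpsd, Matrix.fromBlocks_add, regGram]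
      simp
    rw [heq]
    exact ((gram_psd (x := x) hpsd (s+1)).submatrix _).add (blkX_psd hlam s)
  have : Invertible (regGram k x lam s) :=
    (regGram k x lam s).invertibleOfIsUnitDet (isUnit_iff_ne_zero.mpr hpd.det_pos.ne')
  have hschur := (Matrix.PosDef.fromBlocks₁₁ (Bcol k x s) (Dblk k x s) hpd).mp hblk
  have h00 := hschur.dotProduct_mulVec_nonneg (fun _ => 1)
  simp only [star_trivial] at h00
  have hval : (fun _ : Fin 1 => (1:ℝ)) ⬝ᵥ
      ((Dblk k x s - (Bcol k x s)ᴴ * (regGram k x lam s)⁻¹ * Bcol k x s) *ᵥ fun _ => 1)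
        = pv k x lam s := by
    simp only [dotProduct, Matrix.mulVec, Fin.sum_univ_one, one_mul, mul_one,
      Matrix.sub_apply, blk_entry, Dblk, Matrix.of_apply]
    rfl
  rw [hval] at h00
  exact h00

include hpsd in
lemma pv_le_one (hbound : ∀ y : X, k y y ≤ 1) (hlam : 0 < lam) (s : ℕ) :
    pv k x lam s ≤ 1 := by
  have hpd := regGram_posdef (x := x) hpsd hlam s
  have hinv := hpd.inv.posSemidef
  have h := hinv.dotProduct_mulVec_nonneg (fun i : Fin s => k (x i) (x s))
  simp only [star_trivial] at h
  have : pv k x lam s ≤ k (x s) (x s) := by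
    rw [pv]; linarith
  exact this.trans (hbound (x s))

end Bounds

section Fin2

variable {X : Type*} {k : X → X → ℝ} {x : ℕ → X} {lam : ℝ}
variable (hpsd : ∀ (n : ℕ) (v : Fin n → X),
      (Matrix.of fun i j => k (v i) (v j) : Matrix (Fin n) (Fin n) ℝ).PosSemidef)

include hpsd in
lemma det_regGram (hlam : 0 < lam) (t : ℕ) :
    (regGram k x lam t).det = ∏ s ∈ Finset.range t, (lam + pv k x lam s) := by
  induction t with
  | zero => simp [Matrix.det_isEmpty]
  | succ n ih => rw [det_regGram_succ hpsd hlam, ih, Finset.prod_range_succ]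

include hpsd in
lemma det_identity (hlam : 0 < lam) (t : ℕ) :
    ((1 : Matrix (Fin t) (Fin t) ℝ) + lam⁻¹ • gramMatrix k x t).det =
      ∏ s ∈ Finset.range t, (1 + lam⁻¹ * pv k x lam s) := by
  have h1 : (1 : Matrix (Fin t) (Fin t) ℝ) + lam⁻¹ • gramMatrix k x t
      = lam⁻¹ • regGram k x lam t := by
    rw [regGram, smul_add, smul_smul, inv_mul_cancel₀ hlam.ne', one_smul, add_comm]
  rw [h1, Matrix.det_smul, det_regGram hpsd hlam, Fintype.card_fin,
    show lam⁻¹ ^ t = ∏ _s ∈ Finset.range t, lam⁻¹ by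
      rw [Finset.prod_const, Finset.card_range],
    ← Finset.prod_mul_distrib]
  refine Finset.prod_congr rfl fun s _ => ?_
  field_simp

lemma log_ineq {c u : ℝ} (hc : 0 < c) (h0 : 0 ≤ u) (h1 : u ≤ 1) :
    u * Real.log (1 + c) ≤ Real.log (1 + c * u) := by
  have hcc := strictConcaveOn_log_Ioi.concaveOn
  have h := hcc.2 (Set.mem_Ioi.mpr one_pos)
    (Set.mem_Ioi.mpr (by linarith : (0:ℝ) < 1 + c))
    (by linarith : (0:ℝ) ≤ 1 - u) h0 (by ring)
  have harg : (1-u) • (1:ℝ) + u • (1+c) = 1 + c * u := by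
    simp only [smul_eq_mul]; ring
  rw [harg] at h
  simpa [Real.log_one, smul_eq_mul] using h

end Fin2


/-- For a positive semidefinite kernel with `k(x,x) ≤ 1`, any points
`x_1, …, x_t` and `λ > 0`, the cumulative sequential posterior variances satisfy
`Σ_{s=1}^t σ²_{s−1}(x_s) ≤ (1 / log(1 + λ⁻¹)) · log det(I_t + λ⁻¹ K_t)`. -/
theorem sum_posterior_variances_le_information_gain
    {X : Type*} (k : X → X → ℝ)
    (hpsd : ∀ (n : ℕ) (v : Fin n → X),
      (Matrix.of fun i j => k (v i) (v j) : Matrix (Fin n) (Fin n) ℝ).PosSemidef)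
    (hbound : ∀ y : X, k y y ≤ 1)
    (x : ℕ → X) (t : ℕ) (lam : ℝ) (hlam : 0 < lam) :
    ∑ s ∈ Finset.range t, postVar k x lam s (x s) ≤
      (1 / Real.log (1 + lam⁻¹)) *
        Real.log ((1 : Matrix (Fin t) (Fin t) ℝ) + lam⁻¹ • gramMatrix k x t).det := by
  have hrw : ∀ s, postVar k x lam s (x s) = pv k x lam s := fun _ => rfl
  rw [Finset.sum_congr rfl fun s _ => hrw s]
  have hc : (0:ℝ) < lam⁻¹ := inv_pos.mpr hlam
  have hL : 0 < Real.log (1 + lam⁻¹) := Real.log_pos (by linarith)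
  rw [det_identity hpsd hlam t,
    Real.log_prod (fun s _ => by
      have := pv_nonneg (x := x) hpsd hlam s
      positivity),
    Finset.mul_sum]
  refine Finset.sum_le_sum fun s _ => ?_
  have h0 := pv_nonneg (x := x) hpsd hlam s
  have h1 := pv_le_one (x := x) hpsd hbound hlam s
  have key := log_ineq hc h0 h1
  rw [div_mul_eq_mul_div, le_div_iff₀ hL]
  linarith
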